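/- Let Y = ΨD + W with D block P-sparse supported on Ω_T, and suppose a block-index set Ω̂ with |Ω̂| ≤ P satisfies ‖D_{Ω_T∖Ω̂}‖_F ≤ C₃‖W‖_F for some constant C₃ ≥ 0. Then the least-squares estimator D̂ (defined by D̂_{Ω̂} = Ψ_{Ω̂}^†Y, zero elsewhere) satisfies ‖D − D̂‖_F ≤ C₄‖W‖_F with C₄ = (C₃(1 − δ_P + δ_{2P}) + √(1+δ_P))/(1 − δ_P), provided Ψ satisfies the structured RIP with δ_{2P} < 1. -/

import Mathlib

open scoped BigOperators
open Matrix
noncomputable section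

variable {Np M L R : ℕ}

/-- Frobenius norm of a complex matrix. -/
def frob {m n : Type*} [Fintype m] [Fintype n] (A : Matrix m n ℂ) : ℝ :=
  Real.sqrt (∑ i, ∑ j, ‖A i j‖ ^ 2)

/-- `D` is block-supported on the block-index set `Ω`. -/
def SuppOn (Ω : Finset (Fin L)) (D : Matrix (Fin L × Fin M) (Fin R) ℂ) : Prop :=
  ∀ p r, p.1 ∉ Ω → D p r = 0

/-- Column-block submatrix `Ψ_Ω` of `Ψ`. -/
def bsub (Ψ : Matrix (Fin Np) (Fin L × Fin M) ℂ) (Ω : Finset (Fin L)) :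
    Matrix (Fin Np) ({l // l ∈ Ω} × Fin M) ℂ :=
  Ψ.submatrix id (fun q => ((q.1 : Fin L), q.2))

/-- Row-block submatrix `D_Ω` of `D`. -/
def rsub (D : Matrix (Fin L × Fin M) (Fin R) ℂ) (Ω : Finset (Fin L)) :
    Matrix ({l // l ∈ Ω} × Fin M) (Fin R) ℂ :=
  D.submatrix (fun q => ((q.1 : Fin L), q.2)) id

/-- Moore–Penrose pseudoinverse `Ψ_Ω^† = (Ψ_Ωᴴ Ψ_Ω)⁻¹ Ψ_Ωᴴ` of the column-block submatrix. -/
def bpinv (Ψ : Matrix (Fin Np) (Fin L × Fin M) ℂ) (Ω : Finset (Fin L)) :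
    Matrix ({l // l ∈ Ω} × Fin M) (Fin Np) ℂ :=
  ((bsub Ψ Ω)ᴴ * bsub Ψ Ω)⁻¹ * (bsub Ψ Ω)ᴴ

/-- Re-embed a matrix indexed by the blocks of `Ω` as a full `ML × R` matrix, zero outside `Ω`. -/
def expand (Ω : Finset (Fin L)) (X : Matrix ({l // l ∈ Ω} × Fin M) (Fin R) ℂ) :
    Matrix (Fin L × Fin M) (Fin R) ℂ :=
  fun p r => if h : p.1 ∈ Ω then X (⟨p.1, h⟩, p.2) r else 0

/-- Structured (block) RIP of order `P` with constant `δ`. -/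
def SRIP (Ψ : Matrix (Fin Np) (Fin L × Fin M) ℂ) (P : ℕ) (δ : ℝ) : Prop :=
  ∀ Ω : Finset (Fin L), Ω.card ≤ P →
    ∀ D : Matrix (Fin L × Fin M) (Fin R) ℂ, SuppOn Ω D →
      (1 - δ) * frob D ^ 2 ≤ frob (Ψ * D) ^ 2 ∧ frob (Ψ * D) ^ 2 ≤ (1 + δ) * frob D ^ 2

section FrobHelpers

variable {α β γ : Type*} [Fintype α] [Fintype β] [Fintype γ]

/-- View a matrix as a Euclidean-space vector. -/
def toE (A : Matrix α β ℂ) : EuclideanSpace ℂ (α × β) := WithLp.toLp 2 (fun p : α × β => A p.1 p.2)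

lemma frob_eq_norm (A : Matrix α β ℂ) : frob A = ‖toE A‖ := by
  rw [EuclideanSpace.norm_eq, frob]
  congr 1
  rw [Fintype.sum_prod_type]
  rfl

lemma frob_nonneg (A : Matrix α β ℂ) : 0 ≤ frob A := Real.sqrt_nonneg _

lemma toE_add (A B : Matrix α β ℂ) : toE (A + B) = toE A + toE B := rfl
lemma toE_sub (A B : Matrix α β ℂ) : toE (A - B) = toE A - toE B := rfl
lemma toE_smul (c : ℂ) (A : Matrix α β ℂ) : toE (c • A) = c • toE A := rfl
lemma toE_zero : toE (0 : Matrix α β ℂ) = 0 := rfl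

lemma frob_add_le (A B : Matrix α β ℂ) : frob (A + B) ≤ frob A + frob B := by
  simp only [frob_eq_norm, toE_add]; exact norm_add_le _ _

lemma frob_sub_le (A B : Matrix α β ℂ) : frob (A - B) ≤ frob A + frob B := by
  simp only [frob_eq_norm, toE_sub]; exact norm_sub_le _ _

lemma frob_eq_zero {A : Matrix α β ℂ} (h : frob A = 0) : A = 0 := by
  rw [frob_eq_norm, norm_eq_zero] at h
  ext i j
  exact congrArg (fun v => v.ofLp (i, j)) h

lemma frob_zero : frob (0 : Matrix α β ℂ) = 0 := by
  rw [frob_eq_norm, toE_zero, norm_zero]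

lemma frob_smul_real (t : ℝ) (A : Matrix α β ℂ) : frob ((t : ℂ) • A) = |t| * frob A := by
  rw [frob_eq_norm, toE_smul, norm_smul, frob_eq_norm, Complex.norm_real, Real.norm_eq_abs]

/-- Frobenius (complex) inner product. -/
def finC (A B : Matrix α β ℂ) : ℂ := inner (𝕜 := ℂ) (toE A) (toE B)

lemma finC_self (A : Matrix α β ℂ) : (finC A A).re = frob A ^ 2 := by
  rw [frob_eq_norm, finC]
  exact inner_self_eq_norm_sq (𝕜 := ℂ) (toE A)

lemma finC_re_le (A B : Matrix α β ℂ) : (finC A B).re ≤ frob A * frob B := by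
  rw [frob_eq_norm, frob_eq_norm]
  exact re_inner_le_norm (𝕜 := ℂ) (toE A) (toE B)

lemma frob_add_sq (A B : Matrix α β ℂ) :
    frob (A + B) ^ 2 = frob A ^ 2 + 2 * (finC A B).re + frob B ^ 2 := by
  simp only [frob_eq_norm, toE_add, finC]
  exact norm_add_sq (𝕜 := ℂ) _ _

lemma frob_sub_sq (A B : Matrix α β ℂ) :
    frob (A - B) ^ 2 = frob A ^ 2 - 2 * (finC A B).re + frob B ^ 2 := by
  simp only [frob_eq_norm, toE_sub, finC]
  exact norm_sub_sq (𝕜 := ℂ) _ _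

lemma finC_add_right (A B C : Matrix α β ℂ) :
    finC A (B + C) = finC A B + finC A C := by
  simp only [finC, toE_add]
  exact inner_add_right _ _ _

lemma finC_eq_sum (A B : Matrix α β ℂ) :
    finC A B = ∑ r : β, star (fun i => A i r) ⬝ᵥ (fun i => B i r) := by
  simp only [finC, PiLp.inner_apply, RCLike.inner_apply, dotProduct, Pi.star_apply, toE]
  rw [Fintype.sum_prod_type, Finset.sum_comm]
  exact Finset.sum_congr rfl fun r _ => Finset.sum_congr rfl fun x _ => mul_comm _ _

lemma finC_mul_left (Mm : Matrix γ α ℂ) (X : Matrix α β ℂ) (Z : Matrix γ β ℂ) :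
    finC (Mm * X) Z = finC X (Mmᴴ * Z) := by
  rw [finC_eq_sum, finC_eq_sum]
  refine Finset.sum_congr rfl fun r _ => ?_
  have h1 : (fun i => (Mm * X) i r) = Mm.mulVec (fun q => X q r) := by
    funext i; simp [Matrix.mul_apply, Matrix.mulVec, dotProduct]
  have h2 : (fun q => (Mmᴴ * Z) q r) = Mmᴴ.mulVec (fun i => Z i r) := by
    funext q; simp [Matrix.mul_apply, Matrix.mulVec, dotProduct]
  rw [h1, h2, star_mulVec, dotProduct_mulVec]

lemma finC_smul_smul (t : ℝ) (ht : t ≠ 0) (A B : Matrix α β ℂ) :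
    finC ((t : ℂ) • A) (((t⁻¹ : ℝ) : ℂ) • B) = finC A B := by
  simp only [finC, toE_smul, inner_smul_left, inner_smul_right]
  rw [Complex.conj_ofReal]
  push_cast
  rw [← mul_assoc, inv_mul_cancel₀ (by exact_mod_cast ht : (t : ℂ) ≠ 0), one_mul]

end FrobHelpers

section ExpandHelpers

lemma sum_off_supp {N : Type*} [AddCommMonoid N] (Ω : Finset (Fin L)) (f : Fin L → N)
    (hf : ∀ l, l ∉ Ω → f l = 0) : ∑ l : Fin L, f l = ∑ l : {x // x ∈ Ω}, f l := by
  rw [Finset.sum_coe_sort Ω f]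
  exact (Finset.sum_subset (Finset.subset_univ Ω) (fun x _ hx => hf x hx)).symm

lemma suppOn_expand (Ω : Finset (Fin L)) (X : Matrix ({l // l ∈ Ω} × Fin M) (Fin R) ℂ) :
    SuppOn Ω (expand Ω X) := by
  intro p r hp
  simp [expand, hp]

lemma frob_expand (Ω : Finset (Fin L)) (X : Matrix ({l // l ∈ Ω} × Fin M) (Fin R) ℂ) :
    frob (expand Ω X) = frob X := by
  unfold frob
  congr 1
  rw [Fintype.sum_prod_type, Fintype.sum_prod_type]
  rw [sum_off_supp Ω _ (fun l hl => by simp [expand, hl])]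
  refine Finset.sum_congr rfl fun l _ => ?_
  refine Finset.sum_congr rfl fun m _ => ?_
  refine Finset.sum_congr rfl fun r _ => ?_
  simp [expand, l.2]

lemma expand_sub (Ω : Finset (Fin L)) (X Y : Matrix ({l // l ∈ Ω} × Fin M) (Fin R) ℂ) :
    expand Ω (X - Y) = expand Ω X - expand Ω Y := by
  ext p r
  by_cases h : p.1 ∈ Ω <;> simp [expand, h]

lemma mul_expand (Ψ : Matrix (Fin Np) (Fin L × Fin M) ℂ) (Ω : Finset (Fin L))
    (X : Matrix ({l // l ∈ Ω} × Fin M) (Fin R) ℂ) :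
    Ψ * expand Ω X = bsub Ψ Ω * X := by
  ext i r
  rw [Matrix.mul_apply, Matrix.mul_apply, Fintype.sum_prod_type, Fintype.sum_prod_type]
  rw [sum_off_supp Ω _ (fun l hl => by simp [expand, hl])]
  refine Finset.sum_congr rfl fun l _ => ?_
  refine Finset.sum_congr rfl fun m _ => ?_
  simp [expand, bsub, l.2]

end ExpandHelpers

section MainLemmas

variable {Np M L R : ℕ}

/-- If `δ < 0`, structured RIP forces all sparse matrices to vanish in Frobenius norm. -/
lemma degenerate_frob_zero (Ψ : Matrix (Fin Np) (Fin L × Fin M) ℂ) (P : ℕ) {δ : ℝ}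
    (hR : SRIP (R := R) Ψ P δ) (hδ : δ < 0) (Ω : Finset (Fin L)) (hc : Ω.card ≤ P)
    (X : Matrix (Fin L × Fin M) (Fin R) ℂ) (hX : SuppOn Ω X) : frob X = 0 := by
  obtain ⟨h1, h2⟩ := hR Ω hc X hX
  have hsq : frob X ^ 2 ≤ 0 := by nlinarith
  have h2' : frob X ^ 2 = 0 := le_antisymm hsq (sq_nonneg _)
  exact pow_eq_zero_iff two_ne_zero |>.mp h2'

/-- Near-orthogonality of images of disjointly supported sparse matrices. -/
lemma cross_bound (Ψ : Matrix (Fin Np) (Fin L × Fin M) ℂ) (P2 : ℕ) {δ : ℝ}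
    (hR : SRIP (R := R) Ψ P2 δ) (hδ : 0 ≤ δ)
    (ΩU ΩV : Finset (Fin L)) (hdisj : Disjoint ΩU ΩV) (hcard : ΩU.card + ΩV.card ≤ P2)
    (U V : Matrix (Fin L × Fin M) (Fin R) ℂ) (hU : SuppOn ΩU U) (hV : SuppOn ΩV V) :
    (finC (Ψ * U) (Ψ * V)).re ≤ δ * frob U * frob V := by
  rcases eq_or_lt_of_le (frob_nonneg U) with hU0 | hU0
  · have : U = 0 := frob_eq_zero hU0.symm
    subst this
    simp [finC, toE_zero, ← hU0]
  rcases eq_or_lt_of_le (frob_nonneg V) with hV0 | hV0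
  · have : V = 0 := frob_eq_zero hV0.symm
    subst this
    simp [finC, toE_zero, ← hV0]
  set a := frob U with ha
  set b := frob V with hb
  set t := Real.sqrt (b / a) with htdef
  have ht : 0 < t := Real.sqrt_pos.mpr (div_pos hV0 hU0)
  have ht2 : t ^ 2 = b / a := Real.sq_sqrt (le_of_lt (div_pos hV0 hU0))
  set U' := ((t : ℂ)) • U with hU'
  set V' := (((t⁻¹ : ℝ) : ℂ)) • V with hV'
  have hfU' : frob U' = t * a := by
    rw [hU', frob_smul_real, abs_of_pos ht]
  have hfV' : frob V' = t⁻¹ * b := by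
    rw [hV', frob_smul_real, abs_of_pos (inv_pos.mpr ht)]
  -- supports
  have hsU' : SuppOn ΩU U' := fun p r hp => by simp [hU', hU p r hp]
  have hsV' : SuppOn ΩV V' := fun p r hp => by simp [hV', hV p r hp]
  have hsAdd : SuppOn (ΩU ∪ ΩV) (U' + V') := by
    intro p r hp
    rw [Finset.mem_union] at hp
    push_neg at hp
    simp [hsU' p r hp.1, hsV' p r hp.2]
  have hsSub : SuppOn (ΩU ∪ ΩV) (U' - V') := by
    intro p r hp
    rw [Finset.mem_union] at hp
    push_neg at hp
    simp [hsU' p r hp.1, hsV' p r hp.2]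
  have hcard' : (ΩU ∪ ΩV).card ≤ P2 := le_trans (Finset.card_union_le _ _) hcard
  -- disjoint supports: zero inner product
  have hzero : (finC U' V').re = 0 := by
    rw [finC_eq_sum]
    have : ∀ r : Fin R, star (fun i => U' i r) ⬝ᵥ (fun i => V' i r) = 0 := by
      intro r
      unfold dotProduct
      refine Finset.sum_eq_zero fun p _ => ?_
      by_cases hp : p.1 ∈ ΩU
      · have : p.1 ∉ ΩV := Finset.disjoint_left.mp hdisj hp
        simp [hsV' p r this]
      · simp [hsU' p r hp]
    simp [this]
  -- norms of sum/difference
  have hab : frob U' ^ 2 + frob V' ^ 2 = 2 * (a * b) := by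
    rw [hfU', hfV']
    have h1 : (t * a) ^ 2 = (b / a) * a ^ 2 := by rw [mul_pow, ht2]
    have h2 : (t⁻¹ * b) ^ 2 = (a / b) * b ^ 2 := by
      rw [mul_pow, ← Real.sqrt_inv, Real.sq_sqrt (by positivity), inv_div]
    rw [h1, h2]
    field_simp
    ring
  have hAddSq : frob (U' + V') ^ 2 = 2 * (a * b) := by
    rw [frob_add_sq, hzero] ; linarith [hab]
  have hSubSq : frob (U' - V') ^ 2 = 2 * (a * b) := by
    rw [frob_sub_sq, hzero] ; linarith [hab]
  have hup := (hR (ΩU ∪ ΩV) hcard' (U' + V') hsAdd).2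
  have hlo := (hR (ΩU ∪ ΩV) hcard' (U' - V') hsSub).1
  rw [hAddSq] at hup
  rw [hSubSq] at hlo
  have hMulAdd : Ψ * (U' + V') = Ψ * U' + Ψ * V' := Matrix.mul_add _ _ _
  have hMulSub : Ψ * (U' - V') = Ψ * U' - Ψ * V' := Matrix.mul_sub _ _ _
  rw [hMulAdd] at hup
  rw [hMulSub] at hlo
  rw [frob_add_sq] at hup
  rw [frob_sub_sq] at hlo
  have hscal : (finC (Ψ * U') (Ψ * V')).re = (finC (Ψ * U) (Ψ * V)).re := by
    rw [hU', hV', Matrix.mul_smul, Matrix.mul_smul, finC_smul_smul t (ne_of_gt ht)]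
  rw [hscal] at hup hlo
  nlinarith [hup, hlo]

open scoped ComplexOrder in
/-- Invertibility of the Gram matrix from the RIP lower bound. -/
lemma gram_isUnit (Ψ : Matrix (Fin Np) (Fin L × Fin M) ℂ) (P : ℕ) {δ : ℝ}
    (hR : SRIP (R := R) Ψ P δ) (hδ : δ < 1) (hRpos : 0 < R)
    (Ω : Finset (Fin L)) (hc : Ω.card ≤ P) :
    IsUnit ((bsub Ψ Ω)ᴴ * bsub Ψ Ω) := by
  set A := bsub Ψ Ω with hA
  rw [← Matrix.mulVec_injective_iff_isUnit]
  have hker : ∀ z : {l // l ∈ Ω} × Fin M → ℂ, (Aᴴ * A).mulVec z = 0 → z = 0 := by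
    intro z hz
    have hAz : A.mulVec z = 0 := by
      have h1 : star (A.mulVec z) ⬝ᵥ A.mulVec z = 0 := by
        rw [star_mulVec, dotProduct_mulVec, Matrix.vecMul_vecMul,
          ← Matrix.dotProduct_mulVec, hz, dotProduct_zero]
      exact dotProduct_star_self_eq_zero.mp h1
    -- build the matrix with all columns z
    set X : Matrix ({l // l ∈ Ω} × Fin M) (Fin R) ℂ := fun q _ => z q with hX
    have hAX : A * X = 0 := by
      ext i r
      have := congrFun hAz i
      rw [Matrix.mul_apply]
      simpa [Matrix.mulVec, dotProduct, hX] using this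
    have hrip := (hR Ω hc (expand Ω X) (suppOn_expand Ω X)).1
    rw [mul_expand, hAX, frob_zero, frob_expand] at hrip
    have hfX : frob X = 0 := by
      have hsq : frob X ^ 2 ≤ 0 := by nlinarith
      have h2' : frob X ^ 2 = 0 := le_antisymm hsq (sq_nonneg _)
      exact pow_eq_zero_iff two_ne_zero |>.mp h2'
    have hX0 : X = 0 := frob_eq_zero hfX
    funext q
    have := congrFun (congrFun hX0 q) ⟨0, hRpos⟩
    simpa [hX] using this
  intro x y hxy
  have : (Aᴴ * A).mulVec (x - y) = 0 := by
    rw [Matrix.mulVec_sub, hxy, sub_self]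
  have := hker _ this
  exact sub_eq_zero.mp this

end MainLemmas

lemma div_key {c v K : ℝ} (hc : 0 < c) (hK : 0 ≤ K) (hv : 0 ≤ v)
    (h : c * v ^ 2 ≤ K * v) : c * v ≤ K := by
  rcases eq_or_lt_of_le hv with h0 | h0
  · rw [← h0, mul_zero]; exact hK
  · have h2 : (c * v) * v ≤ K * v := by nlinarith [h]
    exact le_of_mul_le_mul_right h2 h0

lemma final_arith {δP δ2P C₃ a v w f s : ℝ} (hden : 0 < 1 - δP) (hs : 0 ≤ s)
    (hkey : (1 - δP) * v ≤ δ2P * a + s * w) (htri : f ≤ a + v) (hawa : a ≤ C₃ * w)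
    (hw : 0 ≤ w) (hcoef : 0 ≤ 1 - δP + δ2P) :
    f ≤ ((C₃ * (1 - δP + δ2P) + s) / (1 - δP)) * w := by
  rw [div_mul_eq_mul_div, le_div_iff₀ hden]
  nlinarith [mul_le_mul_of_nonneg_right htri hden.le,
    mul_le_mul_of_nonneg_right hawa hcoef]

/-- final noise-robust recovery guarantee
`‖D − D̂‖_F ≤ C₄ ‖W‖_F` with `C₄ = (C₃(1 − δ_P + δ_{2P}) + √(1+δ_P))/(1 − δ_P)`. -/
theorem final_recovery_guarantee
    (Ψ : Matrix (Fin Np) (Fin L × Fin M) ℂ) (P : ℕ) (δP δ2P : ℝ)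
    (hRIP_P : SRIP (R := R) Ψ P δP) (hRIP_2P : SRIP (R := R) Ψ (2 * P) δ2P)
    (hmono : δP ≤ δ2P) (hδ2P : δ2P < 1)
    (ΩT Ωhat : Finset (Fin L)) (hcT : ΩT.card ≤ P) (hchat : Ωhat.card ≤ P)
    (D : Matrix (Fin L × Fin M) (Fin R) ℂ) (hD : SuppOn ΩT D)
    (W Y : Matrix (Fin Np) (Fin R) ℂ) (hY : Y = Ψ * D + W)
    (C₃ : ℝ) (hC₃ : 0 ≤ C₃)
    (hmiss : frob (rsub D (ΩT \ Ωhat)) ≤ C₃ * frob W)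
    (Dhat : Matrix (Fin L × Fin M) (Fin R) ℂ)
    (hDhat : Dhat = expand Ωhat (bpinv Ψ Ωhat * Y)) :
    frob (D - Dhat) ≤
      ((C₃ * (1 - δP + δ2P) + Real.sqrt (1 + δP)) / (1 - δP)) * frob W := by
  have hδP1 : δP < 1 := lt_of_le_of_lt hmono hδ2P
  have hden : 0 < 1 - δP := by linarith
  have hRHSnn : 0 ≤ ((C₃ * (1 - δP + δ2P) + Real.sqrt (1 + δP)) / (1 - δP)) * frob W := by
    apply mul_nonneg _ (frob_nonneg W)
    apply div_nonneg _ hden.le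
    have h1 : 0 ≤ C₃ * (1 - δP + δ2P) := mul_nonneg hC₃ (by linarith)
    linarith [Real.sqrt_nonneg (1 + δP)]
  -- degenerate case δ2P < 0
  rcases lt_or_ge δ2P 0 with hneg | hδ2P0
  · have hsupp : SuppOn (ΩT ∪ Ωhat) (D - Dhat) := by
      intro p r hp
      rw [Finset.mem_union] at hp; push_neg at hp
      have h1 := hD p r hp.1
      have h2 : Dhat p r = 0 := by rw [hDhat]; exact suppOn_expand _ _ p r hp.2
      simp [Matrix.sub_apply, h1, h2]
    have hz := degenerate_frob_zero Ψ (2 * P) hRIP_2P hneg (ΩT ∪ Ωhat)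
      (le_trans (Finset.card_union_le _ _) (by omega)) _ hsupp
    rw [hz]; exact hRHSnn
  -- degenerate case δP < 0
  rcases lt_or_ge δP 0 with hnegP | hδP0
  · have hzD := degenerate_frob_zero Ψ P hRIP_P hnegP ΩT hcT D hD
    have hsDhat : SuppOn Ωhat Dhat := by rw [hDhat]; exact suppOn_expand _ _
    have hzDh := degenerate_frob_zero Ψ P hRIP_P hnegP Ωhat hchat Dhat hsDhat
    calc frob (D - Dhat) ≤ frob D + frob Dhat := frob_sub_le _ _
      _ = 0 := by rw [hzD, hzDh]; ring
      _ ≤ _ := hRHSnn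
  -- degenerate case R = 0
  rcases Nat.eq_zero_or_pos R with hR0 | hRpos
  · subst hR0
    have hz : frob (D - Dhat) = 0 := by simp [frob]
    rw [hz]; exact hRHSnn
  -- main case
  set A := bsub Ψ Ωhat with hA
  have hGunit : IsUnit (Aᴴ * A) := gram_isUnit Ψ P hRIP_P hδP1 hRpos Ωhat hchat
  have hGG : (Aᴴ * A) * (Aᴴ * A)⁻¹ = 1 :=
    Matrix.mul_nonsing_inv _ ((Matrix.isUnit_iff_isUnit_det _).mp hGunit)
  set D₁ := expand Ωhat (rsub D Ωhat) with hD₁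
  set D₂ := D - D₁ with hD₂
  set Vm := bpinv Ψ Ωhat * Y - rsub D Ωhat with hVm
  set U := expand Ωhat Vm with hU
  set Z := Ψ * D₂ + W with hZ
  have hid : D - Dhat = D₂ - U := by
    rw [hU, hVm, expand_sub, hDhat, hD₂, hD₁]
    abel
  have hD₂eq : D₂ = expand (ΩT \ Ωhat) (rsub D (ΩT \ Ωhat)) := by
    rw [hD₂, hD₁]
    ext p r
    by_cases h1 : p.1 ∈ Ωhat
    · have hns : p.1 ∉ ΩT \ Ωhat := by simp [h1]
      simp [expand, Matrix.sub_apply, h1, hns, rsub, Prod.mk.eta]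
    · by_cases h2 : p.1 ∈ ΩT
      · have hmem : p.1 ∈ ΩT \ Ωhat := Finset.mem_sdiff.mpr ⟨h2, h1⟩
        simp [expand, Matrix.sub_apply, h1, hmem, rsub, Prod.mk.eta]
      · have hns : p.1 ∉ ΩT \ Ωhat := by simp [h2]
        simp [expand, Matrix.sub_apply, h1, hns, hD p r h2]
  have ha_eq : frob D₂ = frob (rsub D (ΩT \ Ωhat)) := by rw [hD₂eq, frob_expand]
  have hsD₂ : SuppOn (ΩT \ Ωhat) D₂ := by rw [hD₂eq]; exact suppOn_expand _ _
  have hsU : SuppOn Ωhat U := suppOn_expand _ _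
  have hΨD₁ : Ψ * D₁ = A * rsub D Ωhat := by rw [hD₁, mul_expand, ← hA]
  have hΨU : Ψ * U = A * Vm := by rw [hU, mul_expand, ← hA]
  have e0 : bpinv Ψ Ωhat * Y = (Aᴴ * A)⁻¹ * Aᴴ * Y := by rw [bpinv, ← hA]
  have e1 : Aᴴ * (A * ((Aᴴ * A)⁻¹ * Aᴴ * Y)) = Aᴴ * Y := by
    simp only [← Matrix.mul_assoc]
    rw [hGG, Matrix.one_mul]
  have key : Aᴴ * (A * Vm) = Aᴴ * Z := by
    calc Aᴴ * (A * Vm)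
        = Aᴴ * (A * ((Aᴴ * A)⁻¹ * Aᴴ * Y)) - Aᴴ * (A * rsub D Ωhat) := by
          rw [hVm, e0, Matrix.mul_sub, Matrix.mul_sub]
      _ = Aᴴ * (Ψ * D + W) - Aᴴ * (Ψ * D₁) := by rw [e1, hY, hΨD₁]
      _ = Aᴴ * Z := by
          rw [hZ, hD₂]
          simp only [Matrix.mul_add, Matrix.mul_sub]
          abel
  have hchain : finC (Ψ * U) (Ψ * U) = finC (Ψ * U) Z := by
    calc finC (Ψ * U) (Ψ * U) = finC (A * Vm) (A * Vm) := by rw [hΨU]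
      _ = finC Vm (Aᴴ * (A * Vm)) := finC_mul_left A Vm (A * Vm)
      _ = finC Vm (Aᴴ * Z) := by rw [key]
      _ = finC (A * Vm) Z := (finC_mul_left A Vm Z).symm
      _ = finC (Ψ * U) Z := by rw [hΨU]
  have hfrobU : (1 - δP) * frob U ^ 2 ≤ frob (Ψ * U) ^ 2 := (hRIP_P Ωhat hchat U hsU).1
  have hsq : frob (Ψ * U) ^ 2 = (finC (Ψ * U) Z).re := by rw [← finC_self, hchain]
  have hsplit : (finC (Ψ * U) Z).re = (finC (Ψ * U) (Ψ * D₂)).re + (finC (Ψ * U) W).re := by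
    rw [hZ, finC_add_right]; simp [Complex.add_re]
  have hcross : (finC (Ψ * U) (Ψ * D₂)).re ≤ δ2P * frob U * frob D₂ :=
    cross_bound Ψ (2 * P) hRIP_2P hδ2P0 Ωhat (ΩT \ Ωhat) Finset.disjoint_sdiff
      (by
        have h := Finset.card_le_card (Finset.sdiff_subset (s := ΩT) (t := Ωhat))
        omega)
      U D₂ hsU hsD₂
  have hup : frob (Ψ * U) ≤ Real.sqrt (1 + δP) * frob U := by
    have h2 := (hRIP_P Ωhat hchat U hsU).2
    have hr : frob (Ψ * U) = Real.sqrt (frob (Ψ * U) ^ 2) := (Real.sqrt_sq (frob_nonneg _)).symm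
    rw [hr]
    calc Real.sqrt (frob (Ψ * U) ^ 2) ≤ Real.sqrt ((1 + δP) * frob U ^ 2) :=
          Real.sqrt_le_sqrt h2
      _ = Real.sqrt (1 + δP) * frob U := by
          rw [Real.sqrt_mul (by linarith), Real.sqrt_sq (frob_nonneg _)]
  have hWb : (finC (Ψ * U) W).re ≤ Real.sqrt (1 + δP) * frob U * frob W :=
    le_trans (finC_re_le _ _) (mul_le_mul_of_nonneg_right hup (frob_nonneg W))
  set v := frob U with hv
  set a := frob D₂ with haa
  set w := frob W with hw
  have hmain : (1 - δP) * v ^ 2 ≤ δ2P * v * a + Real.sqrt (1 + δP) * v * w := by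
    have := hfrobU
    linarith [hsq, hsplit, hcross, hWb]
  have hKnn : 0 ≤ δ2P * a + Real.sqrt (1 + δP) * w :=
    add_nonneg (mul_nonneg hδ2P0 (frob_nonneg _))
      (mul_nonneg (Real.sqrt_nonneg _) (frob_nonneg _))
  have hvnn : 0 ≤ v := frob_nonneg U
  have hmain' : (1 - δP) * v ^ 2 ≤ (δ2P * a + Real.sqrt (1 + δP) * w) * v := by
    linarith [hmain]
  have hkey : (1 - δP) * v ≤ δ2P * a + Real.sqrt (1 + δP) * w :=
    div_key hden hKnn hvnn hmain'
  have htri : frob (D - Dhat) ≤ a + v := by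
    rw [hid]; exact frob_sub_le D₂ U
  have hawa : a ≤ C₃ * w := by rw [ha_eq]; exact hmiss
  exact final_arith hden (Real.sqrt_nonneg _) hkey htri hawa (frob_nonneg W) (by linarith)
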